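/- For every real ν ≥ 1, one has √(2/e) < (Γ(ν)/√π)·(e/ν)^{ν − 1/2} < 1, where Γ denotes the real Gamma function. -/

import Mathlib

open Real MeasureTheory

/-- Modified Bessel function of the second kind, via its integral representation. -/
noncomputable def besselK (ν z : ℝ) : ℝ :=
  ∫ t in Set.Ioi (0 : ℝ), Real.exp (-z * Real.cosh t) * Real.cosh (ν * t)

open Filter

/-- key: 2(y-1) < (y+1) log y for y > 1 -/
lemma key_log {y : ℝ} (hy : 1 < y) : 2 * (y - 1) < (y + 1) * Real.log y := by
  set ψ : ℝ → ℝ := fun t => (t + 1) * Real.log t - 2 * (t - 1) with hψ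
  have hd : ∀ t ∈ Set.Ioi (1:ℝ), HasDerivAt ψ (Real.log t + (t+1)/t - 2) t := by
    intro t ht
    have ht0 : (0:ℝ) < t := lt_trans one_pos ht
    have h1 : HasDerivAt (fun t : ℝ => (t + 1) * Real.log t) (1 * Real.log t + (t+1) * t⁻¹) t :=
      ((hasDerivAt_id t).add_const 1).mul (Real.hasDerivAt_log ht0.ne')
    have h2 : HasDerivAt (fun t : ℝ => 2 * (t - 1)) 2 t := by
      simpa using ((hasDerivAt_id t).sub_const 1).const_mul 2
    exact (h1.sub h2).congr_deriv (by ring)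
  have hmono : StrictMonoOn ψ (Set.Ici (1:ℝ)) := by
    apply strictMonoOn_of_deriv_pos (convex_Ici 1)
    · apply ContinuousOn.sub
      · exact (continuousOn_id.add continuousOn_const).mul
          (Real.continuousOn_log.mono (by intro t ht; simp at ht ⊢; linarith))
      · fun_prop
    · intro t ht
      rw [interior_Ici] at ht
      rw [(hd t ht).deriv]
      have ht0 : (0:ℝ) < t := lt_trans one_pos ht
      have : 1 - t⁻¹ < Real.log t := by
        have := Real.log_lt_sub_one_of_pos (x := t⁻¹) (by positivity) (by
          simp only [ne_eq, inv_eq_one]; exact ne_of_gt ht)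
        rw [Real.log_inv] at this
        linarith
      have h3 : (t+1)/t = 1 + t⁻¹ := by field_simp
      rw [h3]
      nlinarith [inv_pos.2 ht0]
  have := hmono (Set.self_mem_Ici) (Set.mem_Ici.2 hy.le) hy
  simp only [hψ, Real.log_one] at this
  linarith

lemma key_log' {y : ℝ} (hy : 1 ≤ y) : 2 * (y - 1) ≤ (y + 1) * Real.log y := by
  rcases eq_or_lt_of_le hy with h | h
  · simp [← h]
  · exact (key_log h).le

noncomputable def Faux (x : ℝ) : ℝ :=
  Real.log (Real.Gamma x) + (x - 1/2) * (1 - Real.log x) - Real.log π / 2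

lemma Faux_step {x : ℝ} (hx : 0 < x) : Faux (x + 1) < Faux x := by
  have hΓ : Real.Gamma (x+1) = x * Real.Gamma x := Real.Gamma_add_one hx.ne'
  have hΓpos : 0 < Real.Gamma x := Real.Gamma_pos_of_pos hx
  have hlog : Real.log (Real.Gamma (x+1)) = Real.log x + Real.log (Real.Gamma x) := by
    rw [hΓ, Real.log_mul hx.ne' hΓpos.ne']
  have hy : 1 < (x+1)/x := by
    rw [lt_div_iff₀ hx]; linarith
  have hk := key_log hy
  rw [Real.log_div (by positivity) hx.ne'] at hk
  have h2 : (x+1)/x - 1 = 1/x := by field_simp; ring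
  have h3 : (x+1)/x + 1 = (2*x+1)/x := by field_simp; ring
  rw [h2, h3, div_mul_eq_mul_div] at hk
  have hk2 : 2 < (2*x+1) * (Real.log (x+1) - Real.log x) := by
    rw [mul_one_div, div_lt_div_iff₀ hx hx, mul_comm] at hk
    exact lt_of_mul_lt_mul_right (by nlinarith) hx.le
  simp only [Faux, hlog]
  nlinarith

lemma Faux_add_nat_le {x : ℝ} (hx : 1 ≤ x) (n : ℕ) : Faux (x + n) ≤ Faux x := by
  induction n with
  | zero => simp
  | succ n ih =>
    have h1 : x + (n+1 : ℕ) = (x + n) + 1 := by push_cast; ring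
    rw [h1]
    exact le_trans (Faux_step (by positivity)).le ih

lemma log_pi_bounds : 1.1445 < Real.log π ∧ Real.log π < 1.1523 := by
  have h98u : Real.log (9/8) ≤ 1/8 := by
    have := Real.log_le_sub_one_of_pos (x := (9:ℝ)/8) (by norm_num)
    linarith
  have h98l : (2:ℝ)/17 ≤ Real.log (9/8) := by
    have := key_log' (y := (9:ℝ)/8) (by norm_num)
    norm_num at this
    linarith
  have h9 : Real.log 9 = 2 * Real.log 3 := by
    rw [show (9:ℝ) = 3^2 by norm_num, Real.log_pow]; push_cast; ring
  have h9' : Real.log 9 = 3 * Real.log 2 + Real.log (9/8) := by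
    rw [show (9:ℝ) = 2^3 * (9/8) by norm_num, Real.log_mul (by norm_num) (by norm_num),
      Real.log_pow]
    push_cast; ring
  have l2l := Real.log_two_gt_d9
  have l2u := Real.log_two_lt_d9
  have h3l : 1.0985 < Real.log 3 := by nlinarith
  have h3u : Real.log 3 < 1.1023 := by nlinarith
  have hp3 : Real.log π = Real.log 3 + Real.log (π/3) := by
    rw [← Real.log_mul (by norm_num) (by positivity), mul_div_cancel₀ _ (by norm_num : (3:ℝ) ≠ 0)]
  have hpil := Real.pi_gt_d6
  have hpiu := Real.pi_lt_d6
  have hp3u : Real.log (π/3) ≤ π/3 - 1 := Real.log_le_sub_one_of_pos (by positivity)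
  have hp3l : (0.046:ℝ) ≤ Real.log (π/3) := by
    have h := key_log' (y := π/3) (by nlinarith)
    have hlogpos : 0 ≤ Real.log (π/3) := Real.log_nonneg (by nlinarith)
    nlinarith
  constructor <;> nlinarith


lemma logGamma_three_halves : Real.log (Real.Gamma (3/2)) = Real.log π / 2 - Real.log 2 := by
  have h : Real.Gamma (3/2) = Real.sqrt π / 2 := by
    have := Real.Gamma_add_one (s := 1/2) (by norm_num)
    rw [show (1:ℝ)/2 + 1 = 3/2 by norm_num, Real.Gamma_one_half_eq] at this
    rw [this]; ring
  rw [h, Real.log_div (by positivity) (by norm_num), Real.log_sqrt Real.pi_pos.le]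

set_option maxHeartbeats 1000000 in
lemma Faux_neg_on {x : ℝ} (h1 : 1 ≤ x) (h2 : x ≤ 2) : Faux x < 0 := by
  have hconv := Real.convexOn_log_Gamma
  have hpl := log_pi_bounds.1
  have hpu := log_pi_bounds.2
  have l2l := Real.log_two_gt_d9
  have l2u := Real.log_two_lt_d9
  -- bound on (x - 1/2)(1 - log x) : 1 - log x ≤ (3 - x)/(x+1)
  have hlx : 2 * (x - 1) ≤ (x + 1) * Real.log x := key_log' h1
  have hxhalf : (0:ℝ) < x - 1/2 := by linarith
  have hx1 : (0:ℝ) < x + 1 := by linarith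
  have hmem1 : (1:ℝ) ∈ Set.Ioi (0:ℝ) := by norm_num
  have hmem32 : (3/2:ℝ) ∈ Set.Ioi (0:ℝ) := by norm_num
  have hmem2 : (2:ℝ) ∈ Set.Ioi (0:ℝ) := by norm_num
  rcases le_total x (3/2) with hc | hc
  · -- chord between 1 and 3/2
    have hchord := hconv.2 hmem1 hmem32 (show (0:ℝ) ≤ 3 - 2*x by linarith)
      (show (0:ℝ) ≤ 2*(x-1) by linarith) (by ring)
    simp only [smul_eq_mul, Function.comp_apply, Real.Gamma_one, Real.log_one, mul_zero] at hchord
    have hx' : (3 - 2*x) * 1 + 2*(x-1) * (3/2) = x := by ring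
    rw [hx', logGamma_three_halves] at hchord
    have key : (x + 1) * Faux x < 0 := by
      have e : (x+1) * Faux x ≤ (x+1) * (0 + 2*(x-1) * (Real.log π / 2 - Real.log 2))
          + ((x - 1/2) * (3 - x) - (x+1) * (Real.log π / 2)) := by
        simp only [Faux]
        have hb : (x - 1/2) * ((x+1) * (1 - Real.log x)) ≤ (x - 1/2) * (3 - x) := by
          apply mul_le_mul_of_nonneg_left _ hxhalf.le
          nlinarith
        nlinarith [hchord, hx1]
      have hA : (0:ℝ) ≤ x^2 - 1 := by nlinarith
      have h5 : (x^2 - 1) * (Real.log π - 2 * Real.log 2) ≤ (x^2 - 1) * (-0.2339) :=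
        mul_le_mul_of_nonneg_left (by linarith) hA
      have h6 : (x+1) * 1.1445 ≤ (x+1) * Real.log π :=
        mul_le_mul_of_nonneg_left hpl.le hx1.le
      nlinarith [e, h5, h6, sq_nonneg (x - 1.186)]
    by_contra hcon
    push_neg at hcon
    nlinarith [mul_nonneg hx1.le hcon]
  · -- chord between 3/2 and 2
    have hchord := hconv.2 hmem32 hmem2 (show (0:ℝ) ≤ 2*(2 - x) by linarith)
      (show (0:ℝ) ≤ 2*x - 3 by linarith) (by ring)
    simp only [smul_eq_mul, Function.comp_apply, Real.Gamma_two, Real.log_one, mul_zero] at hchord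
    have hx' : 2*(2-x) * (3/2) + (2*x - 3) * 2 = x := by ring
    rw [hx', logGamma_three_halves] at hchord
    have key : (x + 1) * Faux x < 0 := by
      have e : (x+1) * Faux x ≤ (x+1) * (2*(2-x) * (Real.log π / 2 - Real.log 2))
          + ((x - 1/2) * (3 - x) - (x+1) * (Real.log π / 2)) := by
        simp only [Faux]
        have hb : (x - 1/2) * ((x+1) * (1 - Real.log x)) ≤ (x - 1/2) * (3 - x) := by
          apply mul_le_mul_of_nonneg_left _ hxhalf.le
          nlinarith
        nlinarith [hchord, hx1]
      have hA : (0:ℝ) ≤ (x+1) * (2-x) := by nlinarith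
      have h5 : ((x+1)*(2-x)) * (2 * Real.log π - 4 * Real.log 2) ≤ ((x+1)*(2-x)) * (-0.4678) :=
        mul_le_mul_of_nonneg_left (by linarith) hA
      have h6 : (x+1) * 1.1445 ≤ (x+1) * Real.log π :=
        mul_le_mul_of_nonneg_left hpl.le hx1.le
      nlinarith [e, h5, h6, sq_nonneg (x - 1.758)]
    by_contra hcon
    push_neg at hcon
    nlinarith [mul_nonneg hx1.le hcon]

lemma chord_lower (j : ℕ) {z : ℝ} (hz : 0 < z) (hz2 : z ≤ (j:ℝ)+1) :
    Real.log ((Nat.factorial j : ℕ) : ℝ) - ((j:ℝ) + 1 - z) * Real.log ((j:ℝ)+1) ≤ Real.log (Real.Gamma z) := by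
  have hj1 : (0:ℝ) < (j:ℝ) + 1 := by positivity
  have hΓj1 : Real.Gamma ((j:ℝ)+1) = ((Nat.factorial j : ℕ) : ℝ) := by
    exact_mod_cast Real.Gamma_nat_eq_factorial j
  rcases eq_or_lt_of_le hz2 with h | h
  · rw [h, hΓj1]; simp
  · have hconv := Real.convexOn_log_Gamma
    have hs := hconv.slope_mono_adjacent (x := z) (y := (j:ℝ)+1) (z := (j:ℝ)+2)
      (Set.mem_Ioi.2 hz) (Set.mem_Ioi.2 (by positivity)) h (by linarith)
    have hΓj2 : Real.Gamma ((j:ℝ)+2) = ((j:ℝ)+1) * Real.Gamma ((j:ℝ)+1) := by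
      have := Real.Gamma_add_one (s := (j:ℝ)+1) (by positivity)
      rw [show (j:ℝ)+1+1 = (j:ℝ)+2 by ring] at this
      exact this
    have hΓpos : 0 < Real.Gamma ((j:ℝ)+1) := Real.Gamma_pos_of_pos hj1
    simp only [Function.comp_apply] at hs
    rw [hΓj2, Real.log_mul hj1.ne' hΓpos.ne'] at hs
    have hden : (j:ℝ) + 2 - ((j:ℝ)+1) = 1 := by ring
    rw [hden] at hs
    have hzj : 0 < (j:ℝ) + 1 - z := by linarith
    rw [div_le_iff₀ hzj] at hs
    simp only [div_one] at hs
    have : Real.log (Real.Gamma ((j:ℝ)+1)) - Real.log (Real.Gamma z)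
        ≤ Real.log ((j:ℝ)+1) * ((j:ℝ)+1-z) := by
      convert hs using 2
      · rfl
      · ring
    rw [hΓj1] at this
    nlinarith

lemma G_tendsto (r : ℝ) (hr1 : r < 1) :
    Filter.Tendsto (fun j : ℕ =>
      Real.log ((Nat.factorial j : ℕ) : ℝ) - r * Real.log ((j:ℝ)+1)
        + ((j:ℝ) + 1 - r - 1/2) * (1 - Real.log ((j:ℝ)+1-r)) - Real.log π / 2)
      Filter.atTop (nhds ((Real.log 2 - 1)/2)) := by
  have hrpos : 0 < 1 - r := by linarith
  have hs : Filter.Tendsto (fun j : ℕ => Real.log (Stirling.stirlingSeq j)) atTop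
      (nhds (Real.log π / 2)) := by
    have hne : Real.sqrt π ≠ 0 := ne_of_gt (Real.sqrt_pos.2 Real.pi_pos)
    have := (Real.continuousAt_log hne).tendsto.comp Stirling.tendsto_stirlingSeq_sqrt_pi
    rwa [Real.log_sqrt Real.pi_pos.le] at this
  have h1 : Filter.Tendsto (fun j : ℕ => Real.log (1 + 1/(j:ℝ))) atTop (nhds 0) := by
    have hb : Filter.Tendsto (fun j : ℕ => 1 + 1/(j:ℝ)) atTop (nhds 1) := by
      have := tendsto_one_div_atTop_nhds_zero_nat (𝕜 := ℝ)
      simpa using (tendsto_const_nhds (x := (1:ℝ))).add this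
    have := (Real.continuousAt_log one_ne_zero).tendsto.comp hb
    rwa [Real.log_one] at this
  have h2 : Filter.Tendsto (fun j : ℕ => Real.log (1 + (1-r)/(j:ℝ))) atTop (nhds 0) := by
    have hb : Filter.Tendsto (fun j : ℕ => 1 + (1-r)/(j:ℝ)) atTop (nhds 1) := by
      have h0 : Filter.Tendsto (fun j : ℕ => (1-r)/(j:ℝ)) atTop (nhds 0) := by
        simpa [div_eq_mul_inv] using (tendsto_one_div_atTop_nhds_zero_nat (𝕜 := ℝ)).const_mul (1-r)
      simpa using (tendsto_const_nhds (x := (1:ℝ))).add h0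
    have := (Real.continuousAt_log one_ne_zero).tendsto.comp hb
    rwa [Real.log_one] at this
  have h3 : Filter.Tendsto (fun j : ℕ => (j:ℝ) * Real.log (1 + (1-r)/(j:ℝ))) atTop
      (nhds (1-r)) :=
    (Real.tendsto_mul_log_one_add_div_atTop (1-r)).comp tendsto_natCast_atTop_atTop
  have HT : Filter.Tendsto (fun j : ℕ =>
      Real.log (Stirling.stirlingSeq j) - Real.log π / 2 + Real.log 2 / 2 + 1/2 - r
        - r * Real.log (1 + 1/(j:ℝ)) - (1/2 - r) * Real.log (1 + (1-r)/(j:ℝ))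
        - (j:ℝ) * Real.log (1 + (1-r)/(j:ℝ))) atTop
      (nhds (Real.log π / 2 - Real.log π / 2 + Real.log 2 / 2 + 1/2 - r - r * 0
        - (1/2 - r) * 0 - (1-r))) := by
    exact ((((((hs.sub_const _).add_const _).add_const _).sub_const r).sub
      (h1.const_mul r)).sub (h2.const_mul (1/2 - r))).sub h3
  have hlim : Real.log π / 2 - Real.log π / 2 + Real.log 2 / 2 + 1/2 - r - r * 0
      - (1/2 - r) * 0 - (1-r) = (Real.log 2 - 1)/2 := by ring
  rw [hlim] at HT
  apply HT.congr'
  filter_upwards [eventually_ge_atTop 1] with j hj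
  have hj1 : (1:ℝ) ≤ (j:ℝ) := by exact_mod_cast hj
  have hjpos : (0:ℝ) < (j:ℝ) := by linarith
  have f3 := Stirling.log_stirlingSeq_formula j
  have f4 : Real.log (2*(j:ℝ)) = Real.log 2 + Real.log j :=
    Real.log_mul (by norm_num) hjpos.ne'
  have f5 : Real.log ((j:ℝ)/Real.exp 1) = Real.log j - 1 := by
    rw [Real.log_div hjpos.ne' (Real.exp_ne_zero 1), Real.log_exp]
  have f1 : Real.log ((j:ℝ)+1) = Real.log j + Real.log (1 + 1/(j:ℝ)) := by
    rw [← Real.log_mul hjpos.ne' (by positivity)]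
    congr 1
    field_simp
  have f2 : Real.log ((j:ℝ)+1-r) = Real.log j + Real.log (1 + (1-r)/(j:ℝ)) := by
    rw [← Real.log_mul hjpos.ne' (by positivity)]
    congr 1
    field_simp
    ring
  have f3' : Real.log ((Nat.factorial j : ℕ) : ℝ) = Real.log (Stirling.stirlingSeq j)
      + 1/2 * Real.log (2*(j:ℝ)) + (j:ℝ) * Real.log ((j:ℝ)/Real.exp 1) := by
    have := f3
    push_cast at this ⊢
    linarith
  rw [f3', f4, f5, f1, f2]
  ring


lemma Faux_ge {x : ℝ} (hx : 1 ≤ x) : (Real.log 2 - 1)/2 ≤ Faux x := by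
  set c : ℕ := ⌈x⌉₊ with hc
  set r : ℝ := (c:ℝ) - x with hrdef
  have hr0 : 0 ≤ r := by
    have := Nat.le_ceil x
    simp only [hrdef]; linarith
  have hr1 : r < 1 := by
    have := Nat.ceil_lt_add_one (by linarith : (0:ℝ) ≤ x)
    simp only [hrdef]; linarith
  refine le_of_tendsto (G_tendsto r hr1) ?_
  filter_upwards [eventually_ge_atTop c] with j hj
  have hcj : ((c:ℕ):ℝ) ≤ (j:ℝ) := by exact_mod_cast hj
  set z : ℝ := (j:ℝ) + 1 - r with hzdef
  have hz0 : 0 < z := by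
    have : (1:ℝ) ≤ (c:ℝ) := by
      have : 1 ≤ c := Nat.one_le_ceil_iff.2 (by linarith)
      exact_mod_cast this
    simp only [hzdef, hrdef]; linarith
  have hz2 : z ≤ (j:ℝ) + 1 := by simp only [hzdef]; linarith
  have hzx : z = x + ((j + 1 - c : ℕ) : ℝ) := by
    have hle : c ≤ j + 1 := le_trans hj (Nat.le_succ j)
    rw [Nat.cast_sub hle]
    push_cast
    simp only [hzdef, hrdef]; ring
  have h1 : Faux z ≤ Faux x := by rw [hzx]; exact Faux_add_nat_le hx _
  have h2 := chord_lower j hz0 hz2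
  have hF : Faux z = Real.log (Real.Gamma z) + (z - 1/2) * (1 - Real.log z)
      - Real.log π / 2 := rfl
  have hr : (j:ℝ) + 1 - z = r := by simp only [hzdef]; ring
  rw [hr] at h2
  have hz' : (j:ℝ) + 1 - r - 1/2 = z - 1/2 := by simp only [hzdef]
  have hz'' : (j:ℝ) + 1 - r = z := by simp only [hzdef]
  rw [hz']
  clear_value z
  clear_value r
  linarith


theorem gamma_bounds (ν : ℝ) (hν : 1 ≤ ν) :
    Real.sqrt (2 / Real.exp 1) <
        (Real.Gamma ν / Real.sqrt π) * (Real.exp 1 / ν) ^ (ν - 1 / 2) ∧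
      (Real.Gamma ν / Real.sqrt π) * (Real.exp 1 / ν) ^ (ν - 1 / 2) < 1 := by
  have hν0 : (0:ℝ) < ν := by linarith
  -- rewrite the main expression as exp (Faux ν)
  have hE : (Real.Gamma ν / Real.sqrt π) * (Real.exp 1 / ν) ^ (ν - 1/2)
      = Real.exp (Faux ν) := by
    have h1 : (Real.exp 1 / ν) ^ (ν - 1/2)
        = Real.exp ((ν - 1/2) * (1 - Real.log ν)) := by
      rw [Real.rpow_def_of_pos (by positivity)]
      congr 1
      rw [Real.log_div (Real.exp_ne_zero 1) hν0.ne', Real.log_exp]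
      ring
    have h2 : Real.Gamma ν = Real.exp (Real.log (Real.Gamma ν)) :=
      (Real.exp_log (Real.Gamma_pos_of_pos hν0)).symm
    have h3 : Real.sqrt π = Real.exp (Real.log π / 2) := by
      rw [← Real.log_sqrt Real.pi_pos.le,
        Real.exp_log (Real.sqrt_pos.2 Real.pi_pos)]
    rw [h1, h2, h3, ← Real.exp_sub, ← Real.exp_add]
    congr 1
    simp only [Faux]
    ring
  have hsq : Real.sqrt (2 / Real.exp 1) = Real.exp ((Real.log 2 - 1)/2) := by
    have h4 : (2:ℝ) / Real.exp 1 = Real.exp (Real.log 2 - 1) := by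
      rw [Real.exp_sub, Real.exp_log two_pos]
    rw [h4, Real.sqrt_eq_rpow, ← Real.exp_mul]
    ring_nf
  -- upper bound : Faux ν < 0
  have hupper : Faux ν < 0 := by
    set n : ℕ := ⌊ν⌋₊ - 1 with hn
    have hfl1 : 1 ≤ ⌊ν⌋₊ := Nat.le_floor (by exact_mod_cast hν)
    have hncast : (n:ℝ) = (⌊ν⌋₊ : ℝ) - 1 := by
      rw [hn, Nat.cast_sub hfl1]; norm_num
    have hfle : (⌊ν⌋₊ : ℝ) ≤ ν := Nat.floor_le hν0.le
    have hflt : ν < (⌊ν⌋₊ : ℝ) + 1 := Nat.lt_floor_add_one ν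
    set x : ℝ := ν - n with hxdef
    have hx1 : 1 ≤ x := by rw [hxdef, hncast]; linarith
    have hx2 : x ≤ 2 := by rw [hxdef, hncast]; linarith
    have hνx : ν = x + n := by rw [hxdef]; ring
    calc Faux ν = Faux (x + n) := by rw [← hνx]
    _ ≤ Faux x := Faux_add_nat_le hx1 n
    _ < 0 := Faux_neg_on hx1 hx2
  -- lower bound : (log 2 - 1)/2 < Faux ν
  have hlower : (Real.log 2 - 1)/2 < Faux ν :=
    lt_of_le_of_lt (Faux_ge (by linarith : (1:ℝ) ≤ ν + 1)) (Faux_step hν0)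
  constructor
  · rw [hE, hsq]
    exact Real.exp_lt_exp.2 hlower
  · rw [hE, ← Real.exp_zero]
    exact Real.exp_lt_exp.2 hupper
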